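/- Let (X, ‖·‖, ≼) be a normal partially ordered Banach space and D a nonempty closed bi-inductive subset of X. Let F : D → D be an ≼-increasing compact mapping and suppose there is a point x₀ ∈ D with x₀ ≼ F x₀. Then the fixed point set 𝔉(F) = {x ∈ D : F x = x} is a nonempty bi-chain-complete subset of D, and F has both an ≼-maximal and an ≼-minimal fixed point. (Corollary 3.8 (b), (b')) -/

import Mathlib

open Filter Topology Bornology

/-- The partial order on a Banach space induced by a cone `K`: `x ≼ y` iff `y - x ∈ K`. -/
def coneLe {X : Type*} [NormedAddCommGroup X] (K : Set X) (x y : X) : Prop := y - x ∈ K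

section Aux
variable {X : Type*} [NormedAddCommGroup X] {K : Set X}

lemma coneLe_refl (hK0 : (0:X) ∈ K) (x : X) : coneLe K x x := by
  simpa [coneLe] using hK0

lemma coneLe_trans (hKadd : ∀ x ∈ K, ∀ y ∈ K, x + y ∈ K) {x y z : X}
    (h1 : coneLe K x y) (h2 : coneLe K y z) : coneLe K x z := by
  have h := hKadd _ h2 _ h1
  rwa [sub_add_sub_cancel] at h

lemma coneLe_antisymm (hKpointed : ∀ x ∈ K, -x ∈ K → x = 0) {x y : X}
    (h1 : coneLe K x y) (h2 : coneLe K y x) : x = y :=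
  (sub_eq_zero.mp (hKpointed _ h1 (by rw [neg_sub]; exact h2))).symm

lemma coneLe_closure_or (hKclosed : IsClosed K) (hK0 : (0:X) ∈ K) {C : Set X}
    (hchain : IsChain (coneLe K) C) {x y : X} (hx : x ∈ closure C) (hy : y ∈ closure C) :
    coneLe K x y ∨ coneLe K y x := by
  obtain ⟨u, hu, hul⟩ := mem_closure_iff_seq_limit.mp hx
  obtain ⟨v, hv, hvl⟩ := mem_closure_iff_seq_limit.mp hy
  have hcomp : ∀ n, coneLe K (u n) (v n) ∨ coneLe K (v n) (u n) := by
    intro n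
    rcases eq_or_ne (u n) (v n) with h | h
    · exact Or.inl (h ▸ coneLe_refl hK0 _)
    · exact hchain (hu n) (hv n) h
  have hfreq : (∃ᶠ n in atTop, coneLe K (u n) (v n)) ∨ ∃ᶠ n in atTop, coneLe K (v n) (u n) :=
    Filter.frequently_or_distrib.mp ((Filter.Eventually.of_forall hcomp).frequently)
  rcases hfreq with h | h
  · left
    have : y - x ∈ closure K :=
      mem_closure_of_frequently_of_tendsto (f := fun n => v n - u n) h (hvl.sub hul)
    rwa [hKclosed.closure_eq] at this
  · right
    have : x - y ∈ closure K :=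
      mem_closure_of_frequently_of_tendsto (f := fun n => u n - v n) h (hul.sub hvl)
    rwa [hKclosed.closure_eq] at this

lemma compact_chain_exists_max {r : X → X → Prop}
    (hrefl : ∀ x, r x x) (htrans : ∀ {a b c : X}, r a b → r b c → r a c)
    (hcl : ∀ x : X, IsClosed {y | r x y}) {S : Set X}
    (hS : IsCompact S) (hne : S.Nonempty)
    (hchain : ∀ x ∈ S, ∀ y ∈ S, r x y ∨ r y x) :
    ∃ s ∈ S, ∀ x ∈ S, r x s := by
  haveI : Nonempty S := hne.to_subtype
  have hdir : Directed (· ⊇ ·) (fun x : S => S ∩ {y | r ↑x y}) := by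
    rintro x y
    rcases hchain x x.2 y y.2 with h | h
    · exact ⟨y, fun w hw => ⟨hw.1, htrans h hw.2⟩, fun w hw => hw⟩
    · exact ⟨x, fun w hw => hw, fun w hw => ⟨hw.1, htrans h hw.2⟩⟩
  have key := IsCompact.nonempty_iInter_of_directed_nonempty_isCompact_isClosed
    (fun x : S => S ∩ {y | r ↑x y}) hdir
    (fun x => ⟨x, x.2, hrefl _⟩)
    (fun x => hS.inter_right (hcl _)) (fun x => hS.isClosed.inter (hcl _))
  obtain ⟨s, hs⟩ := key
  simp only [Set.mem_iInter, Set.mem_inter_iff, Set.mem_setOf_eq] at hs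
  obtain ⟨x0⟩ := ‹Nonempty S›
  exact ⟨s, (hs x0).1, fun x hx => (hs ⟨x, hx⟩).2⟩

lemma isClosed_coneLe_left (hKclosed : IsClosed K) (x : X) :
    IsClosed {y : X | coneLe K x y} := by
  have : {y : X | coneLe K x y} = (fun y => y - x) ⁻¹' K := rfl
  rw [this]
  exact hKclosed.preimage (continuous_id.sub continuous_const)

lemma isClosed_coneLe_right (hKclosed : IsClosed K) (x : X) :
    IsClosed {y : X | coneLe K y x} := by
  have : {y : X | coneLe K y x} = (fun y => x - y) ⁻¹' K := rfl
  rw [this]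
  exact hKclosed.preimage (continuous_const.sub continuous_id)

lemma bounded_of_order_bounded {l : ℝ}
    (hnorm : ∀ x y : X, x ∈ K → y - x ∈ K → ‖x‖ ≤ l * ‖y‖)
    {C : Set X} {a b : X} (ha : ∀ c ∈ C, coneLe K a c) (hb : ∀ c ∈ C, coneLe K c b) :
    IsBounded C := by
  rw [isBounded_iff_forall_norm_le]
  refine ⟨‖a‖ + l * ‖b - a‖, fun c hc => ?_⟩
  have h1 : c - a ∈ K := ha c hc
  have h2 : (b - a) - (c - a) ∈ K := by
    rw [sub_sub_sub_cancel_right]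
    exact hb c hc
  have h3 : ‖c - a‖ ≤ l * ‖b - a‖ := hnorm _ _ h1 h2
  calc ‖c‖ = ‖a + (c - a)‖ := by rw [add_sub_cancel]
    _ ≤ ‖a‖ + ‖c - a‖ := norm_add_le _ _
    _ ≤ ‖a‖ + l * ‖b - a‖ := by linarith

/-- From a point of the closure of `C ⊆ D`, get a sequence in `C` converging to it,
whose image under `F` converges to `F s`. -/
lemma seq_to_closure {D C : Set X} {F : X → X} (hDclosed : IsClosed D)
    (hFcont : ContinuousOn F D) (hCD : C ⊆ D) {s : X} (hs : s ∈ closure C) :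
    s ∈ D ∧ ∃ u : ℕ → X, (∀ n, u n ∈ C) ∧ Tendsto u atTop (𝓝 s) ∧
      Tendsto (fun n => F (u n)) atTop (𝓝 (F s)) := by
  obtain ⟨u, hu, hul⟩ := mem_closure_iff_seq_limit.mp hs
  have hsD : s ∈ D := hDclosed.closure_subset_iff.mpr hCD hs
  refine ⟨hsD, u, hu, hul, ?_⟩
  have h1 : Tendsto u atTop (𝓝[D] s) :=
    tendsto_nhdsWithin_of_tendsto_nhds_of_eventually_within u hul
      (Eventually.of_forall fun n => hCD (hu n))
  exact ((hFcont s hsD).tendsto).comp h1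

/-- Supremum of a norm-bounded chain of fixed points of a compact map. -/
lemma sup_fixed (hKclosed : IsClosed K) (hK0 : (0:X) ∈ K)
    (hKadd : ∀ x ∈ K, ∀ y ∈ K, x + y ∈ K)
    {D : Set X} (hDclosed : IsClosed D) {F : X → X}
    (hFcont : ContinuousOn F D)
    (hFcomp : ∀ C ⊆ D, IsBounded C → IsCompact (closure (F '' C)))
    {C : Set X} (hCD : C ⊆ {x | x ∈ D ∧ F x = x}) (hCne : C.Nonempty)
    (hchain : IsChain (coneLe K) C) (hbd : IsBounded C) :
    ∃ s, (s ∈ D ∧ F s = s) ∧ (∀ c ∈ C, coneLe K c s) ∧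
      ∀ b, (∀ c ∈ C, coneLe K c b) → coneLe K s b := by
  have hCD' : C ⊆ D := fun c hc => (hCD hc).1
  have himg : F '' C = C := by
    ext x
    constructor
    · rintro ⟨c, hc, rfl⟩
      rw [(hCD hc).2]; exact hc
    · intro hx; exact ⟨x, hx, (hCD hx).2⟩
  have hcpt : IsCompact (closure C) := by
    rw [← himg]; exact hFcomp C hCD' hbd
  obtain ⟨s, hsc, hmax⟩ := compact_chain_exists_max (r := coneLe K)
    (coneLe_refl hK0) (fun h1 h2 => coneLe_trans hKadd h1 h2)
    (isClosed_coneLe_left hKclosed) hcpt hCne.closure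
    (fun x hx y hy => coneLe_closure_or hKclosed hK0 hchain hx hy)
  obtain ⟨hsD, u, hu, hul, hFul⟩ := seq_to_closure hDclosed hFcont hCD' hsc
  have hfix : F s = s := by
    have : (fun n => F (u n)) = u := funext fun n => (hCD (hu n)).2
    rw [this] at hFul
    exact tendsto_nhds_unique hFul hul
  refine ⟨s, ⟨hsD, hfix⟩, fun c hc => hmax c (subset_closure hc), fun b hb => ?_⟩
  have htend : Tendsto (fun n => b - u n) atTop (𝓝 (b - s)) := tendsto_const_nhds.sub hul
  exact hKclosed.mem_of_tendsto htend (Eventually.of_forall fun n => hb _ (hu n))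

/-- Infimum of a norm-bounded chain of fixed points of a compact map. -/
lemma inf_fixed (hKclosed : IsClosed K) (hK0 : (0:X) ∈ K)
    (hKadd : ∀ x ∈ K, ∀ y ∈ K, x + y ∈ K)
    {D : Set X} (hDclosed : IsClosed D) {F : X → X}
    (hFcont : ContinuousOn F D)
    (hFcomp : ∀ C ⊆ D, IsBounded C → IsCompact (closure (F '' C)))
    {C : Set X} (hCD : C ⊆ {x | x ∈ D ∧ F x = x}) (hCne : C.Nonempty)
    (hchain : IsChain (coneLe K) C) (hbd : IsBounded C) :
    ∃ s, (s ∈ D ∧ F s = s) ∧ (∀ c ∈ C, coneLe K s c) ∧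
      ∀ a, (∀ c ∈ C, coneLe K a c) → coneLe K a s := by
  have hCD' : C ⊆ D := fun c hc => (hCD hc).1
  have himg : F '' C = C := by
    ext x
    constructor
    · rintro ⟨c, hc, rfl⟩
      rw [(hCD hc).2]; exact hc
    · intro hx; exact ⟨x, hx, (hCD hx).2⟩
  have hcpt : IsCompact (closure C) := by
    rw [← himg]; exact hFcomp C hCD' hbd
  obtain ⟨s, hsc, hmin⟩ := compact_chain_exists_max (r := fun a b => coneLe K b a)
    (coneLe_refl hK0) (fun h1 h2 => coneLe_trans hKadd h2 h1)
    (fun x => isClosed_coneLe_right hKclosed x) hcpt hCne.closure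
    (fun x hx y hy => (coneLe_closure_or hKclosed hK0 hchain hx hy).symm)
  obtain ⟨hsD, u, hu, hul, hFul⟩ := seq_to_closure hDclosed hFcont hCD' hsc
  have hfix : F s = s := by
    have : (fun n => F (u n)) = u := funext fun n => (hCD (hu n)).2
    rw [this] at hFul
    exact tendsto_nhds_unique hFul hul
  refine ⟨s, ⟨hsD, hfix⟩, fun c hc => hmin c (subset_closure hc), fun a ha => ?_⟩
  have htend : Tendsto (fun n => u n - a) atTop (𝓝 (s - a)) := hul.sub tendsto_const_nhds
  exact hKclosed.mem_of_tendsto htend (Eventually.of_forall fun n => ha _ (hu n))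

/-- Existence of a fixed point from an orbit starting at `x₀ ≼ F x₀`. -/
lemma exists_fixed_point (hKclosed : IsClosed K) (hK0 : (0:X) ∈ K)
    (hKadd : ∀ x ∈ K, ∀ y ∈ K, x + y ∈ K)
    (hKpointed : ∀ x ∈ K, -x ∈ K → x = 0)
    {l : ℝ} (hnorm : ∀ x y : X, x ∈ K → y - x ∈ K → ‖x‖ ≤ l * ‖y‖)
    {D : Set X} (hDclosed : IsClosed D)
    (hDbiInd : ∀ C ⊆ D, C.Nonempty → IsChain (coneLe K) C →
      (∃ b ∈ D, ∀ c ∈ C, coneLe K c b) ∧ (∃ a ∈ D, ∀ c ∈ C, coneLe K a c))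
    {F : X → X} (hFmaps : ∀ x ∈ D, F x ∈ D)
    (hFinc : ∀ x ∈ D, ∀ y ∈ D, coneLe K x y → coneLe K (F x) (F y))
    (hFcont : ContinuousOn F D)
    (hFcomp : ∀ C ⊆ D, IsBounded C → IsCompact (closure (F '' C)))
    {x₀ : X} (hx₀ : x₀ ∈ D) (h₀ : coneLe K x₀ (F x₀)) :
    ∃ s, s ∈ D ∧ F s = s := by
  set it : ℕ → X := fun n => F^[n] x₀ with hit
  have hitsucc : ∀ n, it (n+1) = F (it n) := fun n => Function.iterate_succ_apply' F n x₀
  have hitD : ∀ n, it n ∈ D := by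
    intro n
    induction n with
    | zero => exact hx₀
    | succ n ih => rw [hitsucc]; exact hFmaps _ ih
  have hstep : ∀ n, coneLe K (it n) (it (n+1)) := by
    intro n
    induction n with
    | zero => exact h₀
    | succ n ih =>
      have h2 := hFinc _ (hitD n) _ (hitD (n+1)) ih
      rw [hitsucc n] at h2
      rw [hitsucc (n+1), hitsucc n]
      exact h2
  have hmono : ∀ m n, m ≤ n → coneLe K (it m) (it n) := by
    intro m n hmn
    induction n, hmn using Nat.le_induction with
    | base => exact coneLe_refl hK0 _
    | succ n hmn ih => exact coneLe_trans hKadd ih (hstep n)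
  set O : Set X := Set.range it with hO
  have hOD : O ⊆ D := by rintro _ ⟨n, rfl⟩; exact hitD n
  have hOne : O.Nonempty := ⟨it 0, 0, rfl⟩
  have hchain : IsChain (coneLe K) O := by
    rintro _ ⟨m, rfl⟩ _ ⟨n, rfl⟩ _
    rcases le_total m n with h | h
    · exact Or.inl (hmono m n h)
    · exact Or.inr (hmono n m h)
  obtain ⟨⟨b, hbD, hub⟩, -⟩ := hDbiInd O hOD hOne hchain
  have hlb : ∀ c ∈ O, coneLe K x₀ c := by
    rintro _ ⟨n, rfl⟩
    exact hmono 0 n (Nat.zero_le n)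
  have hbd : IsBounded O := bounded_of_order_bounded hnorm hlb hub
  have hFO : ∀ x ∈ O, F x ∈ O := by
    rintro _ ⟨n, rfl⟩
    exact ⟨n+1, hitsucc n⟩
  have hsub : O ⊆ {x₀} ∪ closure (F '' O) := by
    rintro _ ⟨n, rfl⟩
    cases n with
    | zero => exact Or.inl rfl
    | succ n =>
      exact Or.inr (subset_closure ⟨it n, ⟨n, rfl⟩, (hitsucc n).symm⟩)
  have hcpt2 : IsCompact ({x₀} ∪ closure (F '' O)) :=
    isCompact_singleton.union (hFcomp O hOD hbd)
  have hcl : closure O ⊆ {x₀} ∪ closure (F '' O) :=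
    closure_minimal hsub (isClosed_singleton.union isClosed_closure)
  have hcpt : IsCompact (closure O) := hcpt2.of_isClosed_subset isClosed_closure hcl
  obtain ⟨s, hsc, hmax⟩ := compact_chain_exists_max (r := coneLe K)
    (coneLe_refl hK0) (fun h1 h2 => coneLe_trans hKadd h1 h2)
    (isClosed_coneLe_left hKclosed) hcpt hOne.closure
    (fun x hx y hy => coneLe_closure_or hKclosed hK0 hchain hx hy)
  obtain ⟨hsD, u, hu, hul, hFul⟩ := seq_to_closure hDclosed hFcont hOD hsc
  have hle1 : coneLe K s (F s) := by
    have hx : ∀ x ∈ O, coneLe K x (F x) := by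
      rintro _ ⟨n, rfl⟩
      have := hstep n
      rwa [hitsucc n] at this
    have htend : Tendsto (fun n => F (u n) - u n) atTop (𝓝 (F s - s)) := hFul.sub hul
    exact hKclosed.mem_of_tendsto htend (Eventually.of_forall fun n => hx _ (hu n))
  have hFsc : F s ∈ closure O :=
    mem_closure_of_tendsto hFul (Eventually.of_forall fun n => hFO _ (hu n))
  have hle2 : coneLe K (F s) s := hmax _ hFsc
  exact ⟨s, hsD, (coneLe_antisymm hKpointed hle1 hle2).symm⟩

end Aux

/-- Corollary 3.8 (b), (b'): in a normal partially ordered Banach space, for an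
≼-increasing compact mapping `F : D → D` on a nonempty closed bi-inductive set `D`, with a
point `x₀ ∈ D` such that `x₀ ≼ F x₀`, the fixed point set `𝔉(F)` is a nonempty
bi-chain-complete subset of `D`, and `F` has both a maximal and a minimal fixed point. -/
theorem singlevalued_fixed_points_biChainComplete_of_normal
    {X : Type*} [NormedAddCommGroup X] [NormedSpace ℝ X] [CompleteSpace X]
    (K : Set X) (hKclosed : IsClosed K) (hK0 : (0 : X) ∈ K)
    (hKadd : ∀ x ∈ K, ∀ y ∈ K, x + y ∈ K)
    (hKsmul : ∀ c : ℝ, 0 ≤ c → ∀ x ∈ K, c • x ∈ K)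
    (hKpointed : ∀ x ∈ K, -x ∈ K → x = 0)
    -- normality of the order
    (hnormal : ∃ l : ℝ, 0 < l ∧ ∀ x y : X, x ∈ K → y - x ∈ K → ‖x‖ ≤ l * ‖y‖)
    -- D is a nonempty closed bi-inductive subset of X
    (D : Set X) (hDne : D.Nonempty) (hDclosed : IsClosed D)
    (hDbiInd : ∀ C ⊆ D, C.Nonempty → IsChain (coneLe K) C →
      (∃ b ∈ D, ∀ c ∈ C, coneLe K c b) ∧ (∃ a ∈ D, ∀ c ∈ C, coneLe K a c))
    -- F maps D into D and is ≼-increasing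
    (F : X → X) (hFmaps : ∀ x ∈ D, F x ∈ D)
    (hFinc : ∀ x ∈ D, ∀ y ∈ D, coneLe K x y → coneLe K (F x) (F y))
    -- F is compact: continuous and maps bounded sets to relatively compact sets
    (hFcont : ContinuousOn F D)
    (hFcomp : ∀ C ⊆ D, Bornology.IsBounded C → IsCompact (closure (F '' C)))
    -- starting point
    (x₀ : X) (hx₀ : x₀ ∈ D) (h₀ : coneLe K x₀ (F x₀)) :
    ({x | x ∈ D ∧ F x = x}).Nonempty ∧
    (∀ C ⊆ {x | x ∈ D ∧ F x = x}, C.Nonempty → IsChain (coneLe K) C →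
      (∃ b, ∀ c ∈ C, coneLe K c b) → (∃ a, ∀ c ∈ C, coneLe K a c) →
      (∃ s, s ∈ {x | x ∈ D ∧ F x = x} ∧ (∀ c ∈ C, coneLe K c s) ∧
        ∀ b, (∀ c ∈ C, coneLe K c b) → coneLe K s b) ∧
      (∃ i, i ∈ {x | x ∈ D ∧ F x = x} ∧ (∀ c ∈ C, coneLe K i c) ∧
        ∀ a, (∀ c ∈ C, coneLe K a c) → coneLe K a i)) ∧
    (∃ m, m ∈ {x | x ∈ D ∧ F x = x} ∧
      ∀ y ∈ {x | x ∈ D ∧ F x = x}, coneLe K m y → m = y) ∧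
    (∃ m', m' ∈ {x | x ∈ D ∧ F x = x} ∧
      ∀ y ∈ {x | x ∈ D ∧ F x = x}, coneLe K y m' → m' = y) := by
  obtain ⟨l, hl, hnorm⟩ := hnormal
  obtain ⟨w, hwD, hwfix⟩ := exists_fixed_point hKclosed hK0 hKadd hKpointed hnorm
    hDclosed hDbiInd hFmaps hFinc hFcont hFcomp hx₀ h₀
  set Fix : Set X := {x | x ∈ D ∧ F x = x} with hFix
  have hFixNe : Fix.Nonempty := ⟨w, hwD, hwfix⟩
  refine ⟨hFixNe, ?_, ?_, ?_⟩
  · -- bi-chain-completeness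
    intro C hCFix hCne hchain ⟨b, hb⟩ ⟨a, ha⟩
    have hbd : IsBounded C := bounded_of_order_bounded hnorm ha hb
    constructor
    · obtain ⟨s, hs, hub, hlub⟩ :=
        sup_fixed hKclosed hK0 hKadd hDclosed hFcont hFcomp hCFix hCne hchain hbd
      exact ⟨s, hs, hub, hlub⟩
    · obtain ⟨i, hi, hlbi, hglb⟩ :=
        inf_fixed hKclosed hK0 hKadd hDclosed hFcont hFcomp hCFix hCne hchain hbd
      exact ⟨i, hi, hlbi, hglb⟩
  · -- maximal fixed point via Zorn
    have hZ : ∀ c : Set Fix, IsChain (fun p q : Fix => coneLe K p.1 q.1) c →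
        ∃ ub : Fix, ∀ p ∈ c, coneLe K p.1 ub.1 := by
      intro c hc
      rcases c.eq_empty_or_nonempty with rfl | hne
      · exact ⟨⟨w, hwD, hwfix⟩, fun p hp => absurd hp (Set.notMem_empty p)⟩
      · set C' : Set X := Subtype.val '' c with hC'
        have hC'Fix : C' ⊆ Fix := by rintro _ ⟨p, hp, rfl⟩; exact p.2
        have hC'D : C' ⊆ D := fun x hx => (hC'Fix hx).1
        have hC'ne : C'.Nonempty := hne.image _
        have hC'chain : IsChain (coneLe K) C' :=
          IsChain.image_of_map_rel _ (coneLe K) Subtype.val (fun _ _ h => h) hc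
        obtain ⟨⟨b, hbD, hub⟩, ⟨a, haD, hlba⟩⟩ := hDbiInd C' hC'D hC'ne hC'chain
        have hbd : IsBounded C' := bounded_of_order_bounded hnorm hlba hub
        obtain ⟨s, hs, hubs, -⟩ :=
          sup_fixed hKclosed hK0 hKadd hDclosed hFcont hFcomp hC'Fix hC'ne hC'chain hbd
        exact ⟨⟨s, hs⟩, fun p hp => hubs p.1 ⟨p, hp, rfl⟩⟩
    obtain ⟨m, hm⟩ := exists_maximal_of_chains_bounded hZ
      (fun h1 h2 => coneLe_trans hKadd h1 h2)
    exact ⟨m.1, m.2, fun y hy hle =>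
      coneLe_antisymm hKpointed hle (hm ⟨y, hy⟩ hle)⟩
  · -- minimal fixed point via Zorn on the reversed order
    have hZ : ∀ c : Set Fix, IsChain (fun p q : Fix => coneLe K q.1 p.1) c →
        ∃ ub : Fix, ∀ p ∈ c, coneLe K ub.1 p.1 := by
      intro c hc
      rcases c.eq_empty_or_nonempty with rfl | hne
      · exact ⟨⟨w, hwD, hwfix⟩, fun p hp => absurd hp (Set.notMem_empty p)⟩
      · set C' : Set X := Subtype.val '' c with hC'
        have hC'Fix : C' ⊆ Fix := by rintro _ ⟨p, hp, rfl⟩; exact p.2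
        have hC'D : C' ⊆ D := fun x hx => (hC'Fix hx).1
        have hC'ne : C'.Nonempty := hne.image _
        have hC'chain : IsChain (coneLe K) C' :=
          IsChain.image_of_map_rel _ (coneLe K) Subtype.val (fun _ _ h => h) (hc.symm)
        obtain ⟨⟨b, hbD, hub⟩, ⟨a, haD, hlba⟩⟩ := hDbiInd C' hC'D hC'ne hC'chain
        have hbd : IsBounded C' := bounded_of_order_bounded hnorm hlba hub
        obtain ⟨i, hi, hlbi, -⟩ :=
          inf_fixed hKclosed hK0 hKadd hDclosed hFcont hFcomp hC'Fix hC'ne hC'chain hbd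
        exact ⟨⟨i, hi⟩, fun p hp => hlbi p.1 ⟨p, hp, rfl⟩⟩
    obtain ⟨m, hm⟩ := exists_maximal_of_chains_bounded hZ
      (fun h1 h2 => coneLe_trans hKadd h2 h1)
    exact ⟨m.1, m.2, fun y hy hle =>
      coneLe_antisymm hKpointed (hm ⟨y, hy⟩ hle) hle⟩
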